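/- arXiv:2104.12635 — 2 statements merged into one kernel-verified Lean document; each statement's English description precedes it below -/
import Mathlib

section
/- Let (n,m,k,l) be natural numbers with m ≤ n−m, k ≤ n, m+k−n ≤ l and l ≤ min(m,k). Then for every integer x with k < x ≤ m, the explicit Racah-presentation pmf vanishes: p(x | n,m,k,l) = 0. Consequently the support of the distribution P_{n,m,k,l} is contained in {0,1,…, min(m, n−m, k)}. -/
open Finset

/-- Rising factorial `(a)_r = a(a+1)⋯(a+r−1)` in `ℚ`. -/
noncomputable def risingFac (a : ℚ) (r : ℕ) : ℚ := ∏ j ∈ Finset.range r, (a + j)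

/-- The terminating `₄F₃`-hypergeometric (Racah polynomial) sum
`∑_{r=0}^{min(x,M,N)} ((−x)_r (x−n−1)_r (−M)_r (−N)_r)/(r! (−m)_r (m−n)_r (−M−N)_r)`. -/
noncomputable def racahSum (n m M N x : ℕ) : ℚ :=
  ∑ r ∈ Finset.range (min x (min M N) + 1),
    risingFac (-(x : ℚ)) r * risingFac ((x : ℚ) - n - 1) r * risingFac (-(M : ℚ)) r *
        risingFac (-(N : ℚ)) r /
      ((r.factorial : ℚ) * risingFac (-(m : ℚ)) r * risingFac ((m : ℚ) - n) r *
        risingFac (-((M : ℚ) + N)) r)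

/-- The explicit Racah-presentation probability mass function `p(x | n,m,k,l)`,
with `M := m−l` and `N := n−m−k+l` (realized as `n+l-m-k` in `ℕ`). -/
noncomputable def racahPMF (n m k l x : ℕ) : ℚ :=
  ((n - k).choose (m - l) : ℚ) * ((n.choose x : ℚ) / (n.choose m : ℚ)) *
    (((n : ℚ) - 2 * x + 1) / ((n : ℚ) - x + 1)) *
    racahSum n m (m - l) (n + l - m - k) x

/-! ### Auxiliary lemmas -/

lemma risingFac_neg_nat (b r : ℕ) :
    risingFac (-(b : ℚ)) r = (-1) ^ r * (b.descFactorial r : ℚ) := by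
  induction r with
  | zero => simp [risingFac]
  | succ r ih =>
    rw [risingFac, Finset.prod_range_succ, ← risingFac, ih]
    rcases lt_or_ge r b with h | h
    · have hc : (-(b : ℚ) + r) = -((b - r : ℕ) : ℚ) := by
        rw [Nat.cast_sub h.le]; ring
      rw [hc, Nat.descFactorial_succ]
      push_cast
      ring
    · rw [Nat.descFactorial_of_lt (by omega : b < r + 1)]
      rcases eq_or_lt_of_le h with heq | h'
      · rw [heq]
        push_cast
        ring
      · rw [Nat.descFactorial_of_lt h']
        push_cast
        ring

lemma descFac_cast (b r : ℕ) :
    (b.descFactorial r : ℚ) = (r.factorial : ℚ) * (b.choose r : ℚ) := by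
  exact_mod_cast congrArg (Nat.cast (R := ℚ)) (Nat.descFactorial_eq_factorial_mul_choose b r)

/-- Alternating binomial sums annihilate polynomials of degree `< M`. -/
lemma alt_sum_choose_mul_eval (M : ℕ) : ∀ P : Polynomial ℚ, P.natDegree < M →
    ∑ r ∈ Finset.range (M + 1), (-1 : ℚ) ^ r * (M.choose r : ℚ) * P.eval (r : ℚ) = 0 := by
  induction M with
  | zero => exact fun P h => absurd h (Nat.not_lt_zero _)
  | succ M ih =>
    intro P hP
    set Q := P - P.comp (Polynomial.X + Polynomial.C 1) with hQdef
    have hQeval : ∀ r : ℕ, Q.eval (r : ℚ) = P.eval (r : ℚ) - P.eval ((r : ℚ) + 1) := by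
      intro r; simp [hQdef, Polynomial.eval_comp]
    have step : ∑ r ∈ Finset.range (M + 1 + 1),
          (-1 : ℚ) ^ r * ((M + 1).choose r : ℚ) * P.eval (r : ℚ)
        = ∑ r ∈ Finset.range (M + 1), (-1 : ℚ) ^ r * (M.choose r : ℚ) * Q.eval (r : ℚ) := by
      have h1 := Finset.sum_range_succ'
        (fun r : ℕ => (-1 : ℚ) ^ r * ((M + 1).choose r : ℚ) * P.eval (r : ℚ)) (M + 1)
      have h2 := Finset.sum_range_succ'
        (fun r : ℕ => (-1 : ℚ) ^ r * (M.choose r : ℚ) * P.eval (r : ℚ)) (M + 1)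
      have h3 := Finset.sum_range_succ
        (fun r : ℕ => (-1 : ℚ) ^ r * (M.choose r : ℚ) * P.eval (r : ℚ)) (M + 1)
      have hper : ∀ r ∈ Finset.range (M + 1),
          (-1 : ℚ) ^ (r + 1) * ((M + 1).choose (r + 1) : ℚ) * P.eval ((r + 1 : ℕ) : ℚ)
          = ((-1 : ℚ) ^ r * (M.choose r : ℚ) * Q.eval (r : ℚ))
            - (-1 : ℚ) ^ r * (M.choose r : ℚ) * P.eval (r : ℚ)
            + (-1 : ℚ) ^ (r + 1) * (M.choose (r + 1) : ℚ) * P.eval ((r + 1 : ℕ) : ℚ) := by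
        intro r _
        rw [hQeval r, Nat.choose_succ_succ]
        push_cast
        ring
      rw [h1, Finset.sum_congr rfl hper]
      rw [Finset.sum_add_distrib, Finset.sum_sub_distrib]
      have h4 : ∑ r ∈ Finset.range (M + 1),
          (-1 : ℚ) ^ (r + 1) * (M.choose (r + 1) : ℚ) * P.eval ((r + 1 : ℕ) : ℚ)
          = (∑ r ∈ Finset.range (M + 1), (-1 : ℚ) ^ r * (M.choose r : ℚ) * P.eval (r : ℚ))
            + (-1 : ℚ) ^ (M + 1) * (M.choose (M + 1) : ℚ) * P.eval ((M + 1 : ℕ) : ℚ)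
            - (-1 : ℚ) ^ 0 * (M.choose 0 : ℚ) * P.eval ((0 : ℕ) : ℚ) := by
        rw [← h3]
        rw [h2]
        ring
      rw [h4, Nat.choose_eq_zero_of_lt (Nat.lt_succ_self M)]
      simp only [Nat.choose_zero_right, Nat.cast_zero, Nat.cast_one, Nat.cast_ofNat]
      push_cast
      ring
    rw [step]
    by_cases hQ : Q = 0
    · simp [hQ]
    · have hP0 : P.natDegree ≠ 0 := by
        intro h0
        apply hQ
        rw [hQdef, Polynomial.eq_C_of_natDegree_eq_zero h0]
        simp
      have hPne : P ≠ 0 := fun h => hP0 (by simp [h])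
      have hX1 : (Polynomial.X + Polynomial.C (1 : ℚ)).natDegree = 1 := by
        simpa using Polynomial.natDegree_X_add_C (1 : ℚ)
      have hcomp_nd : (P.comp (Polynomial.X + Polynomial.C 1)).natDegree = P.natDegree := by
        rw [Polynomial.natDegree_comp, hX1, mul_one]
      have hcomp_lc : (P.comp (Polynomial.X + Polynomial.C 1)).leadingCoeff = P.leadingCoeff := by
        rw [Polynomial.leadingCoeff_comp (by rw [hX1]; exact one_ne_zero),
          (Polynomial.monic_X_add_C (1 : ℚ)).leadingCoeff, one_pow, mul_one]
      have hcne : P.comp (Polynomial.X + Polynomial.C 1) ≠ 0 := by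
        intro h
        rw [h] at hcomp_nd
        simp at hcomp_nd
        exact hP0 hcomp_nd.symm
      have hdd : (P.comp (Polynomial.X + Polynomial.C 1)).degree = P.degree := by
        rw [Polynomial.degree_eq_natDegree hcne, Polynomial.degree_eq_natDegree hPne, hcomp_nd]
      have hdeg : (P.comp (Polynomial.X + Polynomial.C 1) - P).degree < P.degree := by
        rw [← hdd]
        exact Polynomial.degree_sub_lt hdd hcne hcomp_lc
      have hQnd : Q.natDegree < P.natDegree := by
        have hQeq : Q = -(P.comp (Polynomial.X + Polynomial.C 1) - P) := by rw [hQdef]; ring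
        rw [hQeq, Polynomial.natDegree_neg]
        refine Polynomial.natDegree_lt_natDegree ?_ hdeg
        intro h
        apply hQ
        rw [hQeq, h, neg_zero]
      exact ih Q (lt_of_lt_of_le hQnd (Nat.lt_succ_iff.mp hP))

/-- Polynomial whose value at natural `r ≤ a` is `(a-r).choose c`. -/
noncomputable def chPoly (a c : ℕ) : Polynomial ℚ :=
  Polynomial.C ((c.factorial : ℚ)⁻¹) *
    ∏ j ∈ Finset.range c, (Polynomial.C ((a : ℚ) - (j : ℚ)) - Polynomial.X)

lemma chPoly_natDegree_le (a c : ℕ) : (chPoly a c).natDegree ≤ c := by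
  refine le_trans (Polynomial.natDegree_mul_le) ?_
  rw [Polynomial.natDegree_C, zero_add]
  refine le_trans (Polynomial.natDegree_prod_le _ _) ?_
  have : ∀ j ∈ Finset.range c,
      (Polynomial.C ((a : ℚ) - (j : ℚ)) - Polynomial.X).natDegree ≤ 1 := by
    intro j _
    refine le_trans (Polynomial.natDegree_sub_le _ _) ?_
    simp only [Polynomial.natDegree_C, Polynomial.natDegree_X]
    omega
  refine le_trans (Finset.sum_le_sum this) ?_
  simp

lemma chPoly_eval (a c r : ℕ) (h : r ≤ a) :
    (chPoly a c).eval (r : ℚ) = ((a - r).choose c : ℚ) := by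
  have har : ((a - r : ℕ) : ℚ) = (a : ℚ) - (r : ℚ) := by
    rw [Nat.cast_sub h]
  have hprod : ∏ j ∈ Finset.range c, ((a : ℚ) - (j : ℚ) - (r : ℚ))
      = (-1 : ℚ) ^ c * risingFac (-((a - r : ℕ) : ℚ)) c := by
    have hcc : (-1 : ℚ) ^ c = ∏ _j ∈ Finset.range c, (-1 : ℚ) := by
      rw [Finset.prod_const, Finset.card_range]
    rw [risingFac, hcc, ← Finset.prod_mul_distrib]
    refine Finset.prod_congr rfl fun j _ => ?_
    rw [har]; ring
  have hsq : (-1 : ℚ) ^ c * (-1 : ℚ) ^ c = 1 := by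
    rw [← pow_add, ← two_mul, pow_mul]; norm_num
  simp only [chPoly, Polynomial.eval_mul, Polynomial.eval_C, Polynomial.eval_prod,
    Polynomial.eval_sub, Polynomial.eval_X]
  rw [hprod, risingFac_neg_nat, descFac_cast]
  have hfac : (c.factorial : ℚ) ≠ 0 := by exact_mod_cast c.factorial_ne_zero
  field_simp
  linear_combination (((a - r).choose c : ℚ)) * hsq

/-- **Support of the distribution** `P_{n,m,k,l}`: the Racah-presentation pmf
vanishes for `k < x ≤ m`, so the support is contained in `{0,…,min(m,n−m,k)}`. -/
theorem racahPMF_eq_zero_of_gt (n m k l : ℕ) (hm : 2 * m ≤ n) (hk : k ≤ n)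
    (hl : m + k ≤ n + l) (hlm : l ≤ m) (hlk : l ≤ k)
    (x : ℕ) (hkx : k < x) (hxm : x ≤ m) :
    racahPMF n m k l x = 0 := by
  have hMN : (m - l) + (n + l - m - k) = n - k := by omega
  have hxn : x ≤ n := by omega
  -- the polynomial
  set P : Polynomial ℚ :=
    chPoly m (m - x) * chPoly (n - m) (k - l) * chPoly (n - k) (x - k - 1) with hPdef
  have hdeg : P.natDegree < m - l := by
    have h1 : P.natDegree ≤ (m - x) + (k - l) + (x - k - 1) := by
      calc P.natDegree
          ≤ (chPoly m (m - x) * chPoly (n - m) (k - l)).natDegree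
            + (chPoly (n - k) (x - k - 1)).natDegree := Polynomial.natDegree_mul_le
        _ ≤ ((chPoly m (m - x)).natDegree + (chPoly (n - m) (k - l)).natDegree)
            + (chPoly (n - k) (x - k - 1)).natDegree :=
            add_le_add_left Polynomial.natDegree_mul_le _
        _ ≤ (m - x) + (k - l) + (x - k - 1) :=
            add_le_add (add_le_add (chPoly_natDegree_le _ _) (chPoly_natDegree_le _ _))
              (chPoly_natDegree_le _ _)
    omega
  set D : ℚ := (m.choose x : ℚ) * ((n - m).choose (n + l - m - k) : ℚ)
    * ((n - k).choose (n + 1 - x) : ℚ) with hDdef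
  have hD : D ≠ 0 := by
    have h1 : 0 < m.choose x := Nat.choose_pos hxm
    have h2 : 0 < (n - m).choose (n + l - m - k) := Nat.choose_pos (by omega)
    have h3 : 0 < (n - k).choose (n + 1 - x) := Nat.choose_pos (by omega)
    rw [hDdef]
    positivity
  -- evaluation of P at naturals r ≤ m - l
  have hPr : ∀ r : ℕ, r ≤ m - l → P.eval (r : ℚ)
      = ((m - r).choose (m - x) : ℚ) * ((n - m - r).choose (k - l) : ℚ)
        * ((n - k - r).choose (x - k - 1) : ℚ) := by
    intro r hr
    rw [hPdef]
    simp only [Polynomial.eval_mul]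
    rw [chPoly_eval _ _ _ (by omega), chPoly_eval _ _ _ (by omega),
      chPoly_eval _ _ _ (by omega)]
  -- per-term identity
  have hterm : ∀ r ∈ Finset.range (min x (min (m - l) (n + l - m - k)) + 1),
      risingFac (-(x : ℚ)) r * risingFac ((x : ℚ) - n - 1) r * risingFac (-((m - l : ℕ) : ℚ)) r *
        risingFac (-((n + l - m - k : ℕ) : ℚ)) r /
      ((r.factorial : ℚ) * risingFac (-(m : ℚ)) r * risingFac ((m : ℚ) - n) r *
        risingFac (-(((m - l : ℕ) : ℚ) + ((n + l - m - k : ℕ) : ℚ))) r)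
      = (-1 : ℚ) ^ r * (((m - l).choose r : ℕ) : ℚ) * P.eval (r : ℚ) / D := by
    intro r hr
    simp only [Finset.mem_range] at hr
    have hrx : r ≤ x := by omega
    have hrM : r ≤ m - l := by omega
    have hrN : r ≤ n + l - m - k := by omega
    have hc1 : (x : ℚ) - n - 1 = -(((n + 1 - x : ℕ)) : ℚ) := by
      rw [Nat.cast_sub (by omega : x ≤ n + 1)]; push_cast; ring
    have hc2 : (m : ℚ) - n = -(((n - m : ℕ)) : ℚ) := by
      rw [Nat.cast_sub (by omega : m ≤ n)]; ring
    have hc3 : -(((m - l : ℕ) : ℚ) + ((n + l - m - k : ℕ) : ℚ)) = -(((n - k : ℕ)) : ℚ) := by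
      rw [← Nat.cast_add, hMN]
    rw [hc1, hc2, hc3, hPr r hrM]
    simp only [risingFac_neg_nat]
    have hne1 : ((-1 : ℚ) ^ r) ≠ 0 := pow_ne_zero _ (by norm_num)
    have hdm : (m.descFactorial r : ℚ) ≠ 0 := by
      have : m.descFactorial r ≠ 0 := by
        rw [Ne, Nat.descFactorial_eq_zero_iff_lt]; omega
      exact_mod_cast this
    have hdnm : ((n - m).descFactorial r : ℚ) ≠ 0 := by
      have : (n - m).descFactorial r ≠ 0 := by
        rw [Ne, Nat.descFactorial_eq_zero_iff_lt]; omega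
      exact_mod_cast this
    have hdnk : ((n - k).descFactorial r : ℚ) ≠ 0 := by
      have : (n - k).descFactorial r ≠ 0 := by
        rw [Ne, Nat.descFactorial_eq_zero_iff_lt]; omega
      exact_mod_cast this
    have hfac : (r.factorial : ℚ) ≠ 0 := by exact_mod_cast r.factorial_ne_zero
    have hden : (r.factorial : ℚ) * ((-1 : ℚ) ^ r * (m.descFactorial r : ℚ)) *
        ((-1 : ℚ) ^ r * ((n - m).descFactorial r : ℚ)) *
        ((-1 : ℚ) ^ r * ((n - k).descFactorial r : ℚ)) ≠ 0 := by
      apply mul_ne_zero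
      apply mul_ne_zero
      apply mul_ne_zero hfac
      all_goals exact mul_ne_zero hne1 (by assumption)
    rw [div_eq_div_iff hden hD]
    -- the three chain identities
    have qa : (x.choose r : ℚ) * (m.choose x : ℚ)
        = (m.choose r : ℚ) * ((m - r).choose (m - x) : ℚ) := by
      have h1 := Nat.choose_mul (n := m) hrx
      have h2 : (m - r).choose (x - r) = (m - r).choose (m - x) := by
        rw [← Nat.choose_symm (by omega : x - r ≤ m - r)]
        congr 1
        omega
      exact_mod_cast by rw [mul_comm (x.choose r) _, h1, h2]
    have qb : ((n + 1 - x).choose r : ℚ) * ((n - k).choose (n + 1 - x) : ℚ)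
        = ((n - k).choose r : ℚ) * ((n - k - r).choose (x - k - 1) : ℚ) := by
      have h1 := Nat.choose_mul (n := n - k) (show r ≤ n + 1 - x by omega)
      have h2 : (n - k - r).choose (n + 1 - x - r) = (n - k - r).choose (x - k - 1) := by
        rw [← Nat.choose_symm (by omega : n + 1 - x - r ≤ n - k - r)]
        congr 1
        omega
      exact_mod_cast by rw [mul_comm ((n + 1 - x).choose r) _, h1, h2]
    have qc : ((n + l - m - k).choose r : ℚ) * ((n - m).choose (n + l - m - k) : ℚ)
        = ((n - m).choose r : ℚ) * ((n - m - r).choose (k - l) : ℚ) := by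
      have h1 := Nat.choose_mul (n := n - m)
        (show r ≤ n + l - m - k by omega)
      have h2 : (n - m - r).choose (n + l - m - k - r) = (n - m - r).choose (k - l) := by
        rw [← Nat.choose_symm (by omega : n + l - m - k - r ≤ n - m - r)]
        congr 1
        omega
      exact_mod_cast by rw [mul_comm ((n + l - m - k).choose r) _, h1, h2]
    rw [hDdef]
    simp only [descFac_cast]
    linear_combination
      (((-1 : ℚ) ^ r) ^ 4 * ((r.factorial : ℚ)) ^ 4 * ((m - l).choose r : ℚ) *
        (((n + 1 - x).choose r : ℚ) * ((n - k).choose (n + 1 - x) : ℚ)) *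
        (((n + l - m - k).choose r : ℚ) * ((n - m).choose (n + l - m - k) : ℚ))) * qa
      + (((-1 : ℚ) ^ r) ^ 4 * ((r.factorial : ℚ)) ^ 4 * ((m - l).choose r : ℚ) *
        ((m.choose r : ℚ) * ((m - r).choose (m - x) : ℚ)) *
        (((n + l - m - k).choose r : ℚ) * ((n - m).choose (n + l - m - k) : ℚ))) * qb
      + (((-1 : ℚ) ^ r) ^ 4 * ((r.factorial : ℚ)) ^ 4 * ((m - l).choose r : ℚ) *
        ((m.choose r : ℚ) * ((m - r).choose (m - x) : ℚ)) *
        (((n - k).choose r : ℚ) * ((n - k - r).choose (x - k - 1) : ℚ))) * qc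
  -- assemble
  have hsum : racahSum n m (m - l) (n + l - m - k) x = 0 := by
    rw [racahSum, Finset.sum_congr rfl hterm, ← Finset.sum_div]
    have hext : ∑ r ∈ Finset.range (min x (min (m - l) (n + l - m - k)) + 1),
          (-1 : ℚ) ^ r * (((m - l).choose r : ℕ) : ℚ) * P.eval (r : ℚ)
        = ∑ r ∈ Finset.range ((m - l) + 1),
          (-1 : ℚ) ^ r * (((m - l).choose r : ℕ) : ℚ) * P.eval (r : ℚ) := by
      refine Finset.sum_subset (Finset.range_subset_range.mpr (by omega)) ?_
      intro r hr hnr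
      simp only [Finset.mem_range] at hr hnr
      have hrM : r ≤ m - l := by omega
      rw [hPr r hrM]
      rcases (show x < r ∨ n + l - m - k < r by omega) with h | h
      · rw [Nat.choose_eq_zero_of_lt (show m - r < m - x by omega)]
        ring
      · rw [Nat.choose_eq_zero_of_lt (show n - m - r < k - l by omega)]
        ring
    rw [hext, alt_sum_choose_mul_eval (m - l) P hdeg, zero_div]
  rw [racahPMF, hsum, mul_zero]
end

section
/- Let (n,m,k,l) be natural numbers with m ≤ n−m, k ≤ n, m+k−n ≤ l and l ≤ min(m,k), and assume l = 0 (so k ≤ n−m). Then for every integer x with 0 ≤ x ≤ m, the explicit Racah-presentation pmf satisfies p(x | n,m,k,0) = (C(n,x)/C(n,m)) · (C(k,x)/C(n−m,x)) · ((n−2x+1)/(n−x+1)) · C(n−k−x, n−m−k). In particular p(x | n,m,k,0) = 0 for k < x ≤ m. -/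
open Finset

lemma risingFac_neg_nat_s6 (a : ℕ) : ∀ r : ℕ, r ≤ a →
    risingFac (-(a : ℚ)) r = (-1) ^ r * (a.factorial : ℚ) / ((a - r).factorial : ℚ)
  | 0, _ => by
    simp [risingFac, div_self (show ((a.factorial : ℚ)) ≠ 0 from Nat.cast_ne_zero.2 (Nat.factorial_ne_zero _))]
  | (r+1), h => by
    rw [risingFac, Finset.prod_range_succ, ← risingFac, risingFac_neg_nat_s6 a r (by omega)]
    have h1 : ((a - r : ℕ) : ℚ) = (a : ℚ) - r := by
      rw [Nat.cast_sub (by omega : r ≤ a)]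
    have h3 : ((a - r).factorial : ℚ) = ((a : ℚ) - r) * ((a - (r+1)).factorial : ℚ) := by
      rw [show a - r = (a - (r+1)) + 1 by omega, Nat.factorial_succ]
      push_cast
      rw [show ((a - (r+1) : ℕ) : ℚ) = (a : ℚ) - (r+1) by
        rw [Nat.cast_sub (by omega : r + 1 ≤ a)]; push_cast; ring]
      ring
    have h4 : (a : ℚ) - r ≠ 0 := by
      have : (r : ℚ) < a := by exact_mod_cast (by omega : r < a)
      linarith
    have h5 : ((a - (r+1)).factorial : ℚ) ≠ 0 := by
      exact_mod_cast Nat.factorial_ne_zero _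
    rw [h3]
    field_simp
    ring

-- alternating Vandermonde sums
noncomputable def altV (P Q S : ℕ) : ℤ :=
  ∑ j ∈ Finset.range (S+1), (-1 : ℤ)^j * (P.choose j) * ((Q - j).choose (S - j))
lemma altV_rec (P Q S : ℕ) : altV (P+1) Q (S+1) = altV P Q (S+1) - altV P (Q-1) S := by
  unfold altV
  rw [Finset.sum_range_succ' _ (S+1), Finset.sum_range_succ' (fun j => (-1 : ℤ)^j * (P.choose j) * ((Q - j).choose (S + 1 - j))) (S+1)]
  have key : ∀ j ∈ Finset.range (S+1),
      (-1 : ℤ)^(j+1) * ((P+1).choose (j+1)) * ((Q - (j+1)).choose (S + 1 - (j+1)))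
        = ((-1 : ℤ)^(j+1) * (P.choose (j+1)) * ((Q - (j+1)).choose (S + 1 - (j+1))))
          - ((-1 : ℤ)^j * (P.choose j) * (((Q-1) - j).choose (S - j))) := by
    intro j hj
    rw [Nat.choose_succ_succ]
    rw [show (Q - 1) - j = Q - (j+1) by omega, show S + 1 - (j+1) = S - j by omega]
    push_cast
    ring
  rw [Finset.sum_congr rfl key, Finset.sum_sub_distrib]
  simp
  ring
lemma altV_zero_right (P Q : ℕ) : altV P Q 0 = 1 := by
  unfold altV; simp
lemma altV_le (P : ℕ) : ∀ Q S : ℕ, P ≤ Q → altV P Q S = ((Q - P).choose S : ℤ) := by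
  induction P with
  | zero =>
    intro Q S _
    unfold altV
    rw [Finset.sum_eq_single 0]
    · simp
    · intro j hj hj0
      rw [Nat.choose_eq_zero_of_lt (by omega : 0 < j)]
      simp
    · simp
  | succ P ih =>
    intro Q S hPQ
    match S with
    | 0 => simp [altV_zero_right]
    | S + 1 =>
      rw [altV_rec, ih Q (S+1) (by omega), ih (Q-1) S (by omega)]
      rw [show Q - 1 - P = Q - (P+1) by omega]
      rw [show Q - P = (Q - (P+1)) + 1 by omega, Nat.choose_succ_succ]
      push_cast
      ring
lemma altV_gt (P : ℕ) : ∀ Q S : ℕ, Q < P → S ≤ Q →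
    altV P Q S = (-1 : ℤ)^S * ((P - Q - 1 + S).choose S : ℤ) := by
  induction P with
  | zero => intro Q S h _; omega
  | succ P ih =>
    intro Q S hQP hSQ
    match S with
    | 0 => simp [altV_zero_right]
    | S + 1 =>
      rw [altV_rec]
      rcases eq_or_lt_of_le (show Q ≤ P by omega) with rfl | hlt
      · rw [altV_le Q Q (S+1) (le_refl Q), ih (Q-1) S (by omega) (by omega)]
        rw [Nat.sub_self, Nat.choose_eq_zero_of_lt (by omega : 0 < S + 1)]
        rw [show Q - (Q-1) - 1 + S = S by omega]
        rw [show Q + 1 - Q - 1 + (S+1) = S + 1 by omega]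
        simp [pow_succ]
      · rw [ih Q (S+1) hlt (by omega), ih (Q-1) S (by omega) (by omega)]
        rw [show P - (Q-1) - 1 + S = P - Q + S by omega,
            show P - Q - 1 + (S+1) = P - Q + S by omega,
            show P + 1 - Q - 1 + (S+1) = (P - Q + S) + 1 by omega,
            Nat.choose_succ_succ]
        push_cast
        ring
lemma invExp : ∀ (r A k : ℕ), r ≤ A → k ≤ A →
    (((A - r).choose k : ℤ))
      = ∑ i ∈ Finset.range (r+1), (-1 : ℤ)^i * (r.choose i) * ((A - i).choose (A - k))
  | 0, A, k, _, hk => by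
    simp [Nat.choose_symm hk]
  | (r+1), A, k, h, hk => by
    rw [Finset.sum_range_succ' _ (r+1)]
    have key : ∀ i ∈ Finset.range (r+1),
        (-1 : ℤ)^(i+1) * ((r+1).choose (i+1)) * ((A - (i+1)).choose (A - k))
          = ((-1 : ℤ)^(i+1) * (r.choose (i+1)) * ((A - (i+1)).choose (A - k)))
            - ((-1 : ℤ)^i * (r.choose i) * (((A-1) - i).choose (A - k))) := by
      intro i hi
      rw [Nat.choose_succ_succ, show (A-1) - i = A - (i+1) by omega]
      push_cast
      ring
    rw [Finset.sum_congr rfl key, Finset.sum_sub_distrib]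
    have e1 : (∑ i ∈ Finset.range (r+1),
        (-1 : ℤ)^(i+1) * (r.choose (i+1)) * ((A - (i+1)).choose (A - k)))
          + (-1 : ℤ)^0 * (((r+1).choose 0 : ℕ) : ℤ) * (((A - 0).choose (A - k) : ℕ) : ℤ)
        = ∑ i ∈ Finset.range (r+2), (-1 : ℤ)^i * (r.choose i) * ((A - i).choose (A - k)) := by
      rw [Finset.sum_range_succ' (fun i => (-1 : ℤ)^i * (r.choose i) * ((A - i).choose (A - k))) (r+1)]
      simp
    have e2 : (∑ i ∈ Finset.range (r+2), (-1 : ℤ)^i * (r.choose i) * ((A - i).choose (A - k)))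
        = ((A - r).choose k : ℤ) := by
      rw [Finset.sum_range_succ, Nat.choose_eq_zero_of_lt (by omega : r < r + 1)]
      rw [← invExp r A k (by omega) hk]
      simp
    match k with
    | 0 =>
      have hz : (∑ i ∈ Finset.range (r+1),
          (-1 : ℤ)^i * (r.choose i) * (((A-1) - i).choose (A - 0))) = 0 := by
        apply Finset.sum_eq_zero
        intro i hi
        rw [Nat.choose_eq_zero_of_lt (by omega : (A-1) - i < A - 0)]
        simp
      rw [hz, show A - (r+1) = (A - r) - 1 by omega]
      rw [Nat.choose_zero_right, Nat.choose_zero_right] at *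
      linarith [e1, e2]
    | k + 1 =>
      have e3 : (∑ i ∈ Finset.range (r+1),
          (-1 : ℤ)^i * (r.choose i) * (((A-1) - i).choose (A - (k+1))))
            = (((A-1) - r).choose k : ℤ) := by
        have e3' := invExp r (A-1) k (by omega) (by omega)
        rw [show (A-1) - k = A - (k+1) by omega] at e3'
        exact e3'.symm
      have pas : ((A - r).choose (k+1) : ℤ)
          = (((A-1) - r).choose k : ℤ) + ((A - (r+1)).choose (k+1) : ℤ) := by
        rw [show A - r = ((A-1) - r) + 1 by omega, Nat.choose_succ_succ,
            show A - (r+1) = (A-1) - r by omega]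
        push_cast; ring
      linarith [e1, e2, e3, pas]
lemma choose_mul_choose (p i j : ℕ) :
    (p.choose (i+j)) * ((i+j).choose i) = (p.choose i) * ((p - i).choose j) := by
  rcases le_or_gt (i+j) p with h | h
  · have := Nat.choose_mul (n := p) (Nat.le_add_right i j)
    simpa using this
  · rw [Nat.choose_eq_zero_of_lt h, Nat.zero_mul]
    rcases le_or_gt i p with hi | hi
    · rw [Nat.choose_eq_zero_of_lt (by omega : p - i < j), Nat.mul_zero]
    · rw [Nat.choose_eq_zero_of_lt hi, Nat.zero_mul]
lemma saal (A B k x : ℕ) (hkA : k ≤ A) (hAB : A ≤ B + k) (hxA : x ≤ A) (hxB : x ≤ B) :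
    (∑ r ∈ Finset.range (x+1),
      (-1:ℤ)^r * ((B+k-x+1).choose r) * ((A-r).choose k) * ((B-r).choose (x-r)))
      = ((B+k-A).choose x : ℤ) * ((A-x).choose (A-k) : ℤ) := by
  set p := B + k - x + 1 with hpdef
  -- Step A : expand C(A-r,k) and swap sums
  have stepA : (∑ r ∈ Finset.range (x+1),
      (-1:ℤ)^r * (p.choose r) * ((A-r).choose k) * ((B-r).choose (x-r)))
      = ∑ i ∈ Finset.range (x+1), ∑ r ∈ Finset.range (x+1),
        (-1:ℤ)^r * (p.choose r) * ((-1:ℤ)^i * (r.choose i) * ((A-i).choose (A-k)))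
          * ((B-r).choose (x-r)) := by
    rw [Finset.sum_comm]
    apply Finset.sum_congr rfl
    intro r hr
    have hr' : r ≤ x := by simpa using Nat.lt_succ_iff.mp (Finset.mem_range.mp hr)
    rw [invExp r A k (le_trans hr' hxA) hkA]
    have ext : (∑ i ∈ Finset.range (r+1), (-1 : ℤ)^i * (r.choose i) * ((A - i).choose (A - k)))
        = ∑ i ∈ Finset.range (x+1), (-1 : ℤ)^i * (r.choose i) * ((A - i).choose (A - k)) := by
      apply Finset.sum_subset
      · exact Finset.range_subset_range.mpr (by omega)
      · intro i hi hni
        rw [Nat.choose_eq_zero_of_lt (by simp at hi hni; omega : r < i)]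
        simp
    rw [ext, Finset.mul_sum, Finset.sum_mul]
  rw [stepA]
  -- Step B : inner sum as altV
  have stepB : ∀ i ∈ Finset.range (x+1),
      (∑ r ∈ Finset.range (x+1),
        (-1:ℤ)^r * (p.choose r) * ((-1:ℤ)^i * (r.choose i) * ((A-i).choose (A-k)))
          * ((B-r).choose (x-r)))
      = ((A-i).choose (A-k) : ℤ) * (p.choose i) * altV (p-i) (B-i) (x-i) := by
    intro i hi
    have hix : i ≤ x := by simpa using Nat.lt_succ_iff.mp (Finset.mem_range.mp hi)
    have drop : (∑ r ∈ Finset.range (x+1),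
        (-1:ℤ)^r * (p.choose r) * ((-1:ℤ)^i * (r.choose i) * ((A-i).choose (A-k)))
          * ((B-r).choose (x-r)))
        = ∑ r ∈ Finset.Ico i (x+1),
        (-1:ℤ)^r * (p.choose r) * ((-1:ℤ)^i * (r.choose i) * ((A-i).choose (A-k)))
          * ((B-r).choose (x-r)) := by
      rw [Finset.range_eq_Ico]
      apply (Finset.sum_subset (Finset.Ico_subset_Ico (by omega) (le_refl _)) ?_).symm
      intro r hr hnr
      rw [Nat.choose_eq_zero_of_lt (by simp at hr hnr; omega : r < i)]
      simp
    rw [drop, Finset.sum_Ico_eq_sum_range, show x + 1 - i = (x - i) + 1 by omega]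
    unfold altV
    rw [Finset.mul_sum]
    apply Finset.sum_congr rfl
    intro j hj
    have hj' : j ≤ x - i := by simpa using Nat.lt_succ_iff.mp (Finset.mem_range.mp hj)
    have hmm : ((p.choose (i+j) : ℤ)) * (((i+j).choose i : ℤ))
        = ((p.choose i : ℤ)) * (((p-i).choose j : ℤ)) := by
      exact_mod_cast congrArg (Nat.cast : ℕ → ℤ) (choose_mul_choose p i j)
    rw [show B - (i+j) = B - i - j by omega, show x - (i+j) = x - i - j by omega, pow_add]
    rcases Nat.even_or_odd i with he | ho
    · rw [he.neg_one_pow]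
      linear_combination ((1:ℤ) * (-1:ℤ)^j * ((A-i).choose (A-k) : ℤ)
        * (((B-i-j).choose (x-i-j) : ℤ))) * hmm
    · rw [ho.neg_one_pow]
      linear_combination ((1:ℤ) * (-1:ℤ)^j * ((A-i).choose (A-k) : ℤ)
        * (((B-i-j).choose (x-i-j) : ℤ))) * hmm
  rw [Finset.sum_congr rfl stepB]
  -- Step C : case split
  rcases le_or_gt x k with hxk | hkx
  · -- x ≤ k
    have hpB : B < p := by omega
    have stepC : ∀ i ∈ Finset.range (x+1),
        ((A-i).choose (A-k) : ℤ) * (p.choose i) * altV (p-i) (B-i) (x-i)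
        = ((A-x).choose (A-k) : ℤ) * ((-1:ℤ)^x
            * ((-1:ℤ)^i * (p.choose i) * ((A-i).choose (x-i)))) := by
      intro i hi
      have hix : i ≤ x := by simpa using Nat.lt_succ_iff.mp (Finset.mem_range.mp hi)
      rw [altV_gt (p-i) (B-i) (x-i) (by omega) (by omega)]
      rw [show p - i - (B-i) - 1 + (x-i) = k - i by omega]
      -- choose manipulations
      have c1 : (A-i).choose (A-k) = (A-i).choose (k-i) := by
        rw [show A - k = (A-i) - (k-i) by omega]
        exact Nat.choose_symm (by omega)
      have c2 : (A-i).choose (k-i) * (k-i).choose (x-i)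
          = (A-i).choose (x-i) * ((A-x).choose (k-x)) := by
        have := Nat.choose_mul (n := A-i) (show x-i ≤ k-i by omega)
        rw [show A - i - (x-i) = A - x by omega, show k - i - (x-i) = k - x by omega] at this
        exact this
      have c3 : (A-x).choose (k-x) = (A-x).choose (A-k) := by
        rw [show A - k = (A-x) - (k-x) by omega]
        exact (Nat.choose_symm (by omega)).symm
      have c4 : (-1:ℤ)^(x-i) * (-1:ℤ)^i = (-1:ℤ)^x := by
        rw [← pow_add, show x - i + i = x by omega]
      have hc : ((A-i).choose (A-k) : ℤ) * ((k-i).choose (x-i) : ℤ)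
          = ((A-x).choose (A-k) : ℤ) * ((A-i).choose (x-i) : ℤ) := by
        rw [c1]
        have : ((A-i).choose (k-i) * (k-i).choose (x-i) : ℤ)
            = ((A-i).choose (x-i) * ((A-x).choose (k-x)) : ℤ) := by exact_mod_cast c2
        rw [c3] at this
        linarith [this]
      rcases Nat.even_or_odd i with he | ho
      · rw [he.neg_one_pow] at c4 ⊢
        linear_combination ((p.choose i : ℤ) * (-1:ℤ)^(x-i)) * hc
          + ((p.choose i : ℤ) * ((A-x).choose (A-k) : ℤ) * ((A-i).choose (x-i) : ℤ)) * c4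
      · rw [ho.neg_one_pow] at c4 ⊢
        linear_combination ((p.choose i : ℤ) * (-1:ℤ)^(x-i)) * hc
          - ((p.choose i : ℤ) * ((A-x).choose (A-k) : ℤ) * ((A-i).choose (x-i) : ℤ)) * c4
    rw [Finset.sum_congr rfl stepC, ← Finset.mul_sum, ← Finset.mul_sum]
    have : (∑ i ∈ Finset.range (x+1), (-1:ℤ)^i * (p.choose i) * ((A-i).choose (x-i)))
        = altV p A x := by
      unfold altV; rfl
    rw [this]
    rcases le_or_gt p A with hpA | hAp
    · rw [altV_le p A x hpA]
      rw [Nat.choose_eq_zero_of_lt (show A - p < x by omega)]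
      rw [Nat.choose_eq_zero_of_lt (show B + k - A < x by omega)]
      simp
    · rw [altV_gt p A x hAp hxA]
      rw [show p - A - 1 + x = B + k - A by omega]
      rcases Nat.even_or_odd x with he | ho
      · rw [he.neg_one_pow]; ring
      · rw [ho.neg_one_pow]; ring
  · -- k < x : everything is zero
    have stepC : ∀ i ∈ Finset.range (x+1),
        ((A-i).choose (A-k) : ℤ) * (p.choose i) * altV (p-i) (B-i) (x-i) = 0 := by
      intro i hi
      have hix : i ≤ x := by simpa using Nat.lt_succ_iff.mp (Finset.mem_range.mp hi)
      rcases le_or_gt i k with hik | hki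
      · have hpB' : p ≤ B := by omega
        rw [altV_le (p-i) (B-i) (x-i) (by omega)]
        rw [show B - i - (p-i) = x - k - 1 by omega]
        rw [Nat.choose_eq_zero_of_lt (show x - k - 1 < x - i by omega)]
        simp
      · rw [Nat.choose_eq_zero_of_lt (show A - i < A - k by omega)]
        simp
    rw [Finset.sum_congr rfl stepC]
    rw [Nat.choose_eq_zero_of_lt (show A - x < A - k by omega)]
    simp
lemma fact_ne (a : ℕ) : ((a.factorial : ℚ)) ≠ 0 :=
  Nat.cast_ne_zero.2 (Nat.factorial_ne_zero _)
lemma term_eq (n m k x r : ℕ) (hm : 2*m ≤ n) (hmk : m + k ≤ n) (hx : x ≤ m)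
    (hrx : r ≤ x) (hrN : r ≤ n - m - k) :
    risingFac (-(x : ℚ)) r * risingFac ((x : ℚ) - n - 1) r * risingFac (-(m : ℚ)) r *
        risingFac (-((n - m - k : ℕ) : ℚ)) r /
      ((r.factorial : ℚ) * risingFac (-(m : ℚ)) r * risingFac ((m : ℚ) - n) r *
        risingFac (-((m : ℚ) + ((n - m - k : ℕ) : ℚ))) r)
    = (x.factorial * k.factorial * (n-m-k).factorial * (n-k-x).factorial : ℚ)
        / ((n-m).factorial * (n-k).factorial)
      * ((-1:ℚ)^r * ((n+1-x).choose r : ℚ) * (((n-m-r).choose k : ℚ))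
          * (((n-k-r).choose (x-r) : ℚ))) := by
  have h2 : (x : ℚ) - n - 1 = -(((n+1-x : ℕ)) : ℚ) := by
    rw [Nat.cast_sub (by omega : x ≤ n + 1)]
    push_cast; ring
  have h5 : (m : ℚ) - n = -(((n-m : ℕ)) : ℚ) := by
    rw [Nat.cast_sub (by omega : m ≤ n)]; ring
  have h6 : -((m : ℚ) + ((n - m - k : ℕ) : ℚ)) = -(((n-k : ℕ)) : ℚ) := by
    rw [Nat.cast_sub (by omega : k ≤ n - m), Nat.cast_sub (by omega : m ≤ n),
        Nat.cast_sub (by omega : k ≤ n)]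
    ring
  rw [h2, h5, h6]
  rw [risingFac_neg_nat_s6 x r hrx,
      risingFac_neg_nat_s6 (n+1-x) r (by omega),
      risingFac_neg_nat_s6 m r (by omega),
      risingFac_neg_nat_s6 (n-m-k) r hrN,
      risingFac_neg_nat_s6 (n-m) r (by omega),
      risingFac_neg_nat_s6 (n-k) r (by omega)]
  rw [Nat.cast_choose ℚ (show r ≤ n+1-x by omega),
      Nat.cast_choose ℚ (show k ≤ n-m-r by omega),
      Nat.cast_choose ℚ (show x-r ≤ n-k-r by omega)]
  rw [show n-m-r-k = n-m-k-r by omega, show n-k-r-(x-r) = n-k-x by omega]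
  have hne : ∀ a : ℕ, ((a.factorial : ℚ)) ≠ 0 := fact_ne
  have hsgn : ((-1 : ℚ)^r) ≠ 0 := pow_ne_zero _ (by norm_num)
  field_simp
lemma racahSum_eq (n m k x : ℕ) (hm : 2*m ≤ n) (hmk : m + k ≤ n) (hx : x ≤ m) :
    racahSum n m m (n-m-k) x
      = (x.factorial * k.factorial * (n-m-k).factorial * (n-k-x).factorial : ℚ)
          / ((n-m).factorial * (n-k).factorial)
        * ((m.choose x : ℚ) * (((n-m-x).choose (n-m-k) : ℚ))) := by
  unfold racahSum
  have hmin : min x (min m (n-m-k)) = min x (n-m-k) := by omega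
  rw [hmin]
  have step1 : ∀ r ∈ Finset.range (min x (n-m-k) + 1),
      risingFac (-(x : ℚ)) r * risingFac ((x : ℚ) - n - 1) r * risingFac (-(m : ℚ)) r *
          risingFac (-((n - m - k : ℕ) : ℚ)) r /
        ((r.factorial : ℚ) * risingFac (-(m : ℚ)) r * risingFac ((m : ℚ) - n) r *
          risingFac (-((m : ℚ) + ((n - m - k : ℕ) : ℚ))) r)
      = (x.factorial * k.factorial * (n-m-k).factorial * (n-k-x).factorial : ℚ)
          / ((n-m).factorial * (n-k).factorial)
        * ((-1:ℚ)^r * ((n+1-x).choose r : ℚ) * (((n-m-r).choose k : ℚ))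
            * (((n-k-r).choose (x-r) : ℚ))) := by
    intro r hr
    have hr' : r ≤ min x (n-m-k) := by simpa using Nat.lt_succ_iff.mp (Finset.mem_range.mp hr)
    exact term_eq n m k x r hm hmk hx (by omega) (by omega)
  rw [Finset.sum_congr rfl step1, ← Finset.mul_sum]
  have ext : (∑ r ∈ Finset.range (min x (n-m-k) + 1),
      (-1:ℚ)^r * ((n+1-x).choose r : ℚ) * (((n-m-r).choose k : ℚ))
        * (((n-k-r).choose (x-r) : ℚ)))
      = ∑ r ∈ Finset.range (x + 1),
      (-1:ℚ)^r * ((n+1-x).choose r : ℚ) * (((n-m-r).choose k : ℚ))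
        * (((n-k-r).choose (x-r) : ℚ)) := by
    apply Finset.sum_subset (Finset.range_subset_range.mpr (by omega))
    intro r hr hnr
    rw [Nat.choose_eq_zero_of_lt (show n-m-r < k by simp at hr hnr; omega)]
    simp
  rw [ext]
  have qsaal : (∑ r ∈ Finset.range (x + 1),
      (-1:ℚ)^r * ((n+1-x).choose r : ℚ) * (((n-m-r).choose k : ℚ))
        * (((n-k-r).choose (x-r) : ℚ)))
      = (m.choose x : ℚ) * (((n-m-x).choose (n-m-k) : ℚ)) := by
    have h := saal (n-m) (n-k) k x (by omega) (by omega) (by omega) (by omega)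
    rw [show (n-k)+k-x+1 = n+1-x by omega, show (n-k)+k-(n-m) = m by omega,
        show (n-m)-x = n-m-x by omega, show (n-m)-k = n-m-k by omega] at h
    exact_mod_cast h
  rw [qsaal]


/-- **Closed form of the pmf in the case `l = 0`**:
`p(x | n,m,k,0) = (C(n,x)/C(n,m)) (C(k,x)/C(n−m,x)) ((n−2x+1)/(n−x+1)) C(n−k−x, n−m−k)`
for `0 ≤ x ≤ m`; in particular `p(x | n,m,k,0) = 0` for `k < x ≤ m`. -/
theorem racahPMF_l_eq_zero (n m k : ℕ) (hm : 2 * m ≤ n) (hk : k ≤ n) (hmk : m + k ≤ n) :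
    (∀ x : ℕ, x ≤ m →
      racahPMF n m k 0 x
        = ((n.choose x : ℚ) / (n.choose m : ℚ)) * ((k.choose x : ℚ) / ((n - m).choose x : ℚ)) *
            (((n : ℚ) - 2 * x + 1) / ((n : ℚ) - x + 1)) * ((n - k - x).choose (n - m - k) : ℚ))
    ∧ (∀ x : ℕ, k < x → x ≤ m → racahPMF n m k 0 x = 0) := by
  constructor
  · intro x hx
    unfold racahPMF
    simp only [Nat.sub_zero, Nat.add_zero]
    rw [racahSum_eq n m k x hm hmk hx]
    have scal : ((n-k).choose m : ℚ)
        * ((x.factorial * k.factorial * (n-m-k).factorial * (n-k-x).factorial : ℚ)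
            / ((n-m).factorial * (n-k).factorial)
          * ((m.choose x : ℚ) * (((n-m-x).choose (n-m-k) : ℚ))))
        = ((k.choose x : ℚ) / ((n - m).choose x : ℚ)) * ((n - k - x).choose (n - m - k) : ℚ) := by
      rcases le_or_gt x k with hxk | hkx
      · rw [Nat.cast_choose ℚ (show m ≤ n-k by omega),
            Nat.cast_choose ℚ (show x ≤ m by omega),
            Nat.cast_choose ℚ (show n-m-k ≤ n-m-x by omega),
            Nat.cast_choose ℚ (show x ≤ k by omega),
            Nat.cast_choose ℚ (show x ≤ n-m by omega),
            Nat.cast_choose ℚ (show n-m-k ≤ n-k-x by omega)]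
        rw [show n-k-m = n-m-k by omega, show n-m-x-(n-m-k) = k-x by omega,
            show n-k-x-(n-m-k) = m-x by omega, show n-m-x = n-m-x by rfl]
        have hne : ∀ a : ℕ, ((a.factorial : ℚ)) ≠ 0 := fact_ne
        field_simp
      · rw [Nat.choose_eq_zero_of_lt (show n-m-x < n-m-k by omega),
            Nat.choose_eq_zero_of_lt (show k < x by omega)]
        simp
    linear_combination ((n.choose x : ℚ) / (n.choose m : ℚ)
      * (((n : ℚ) - 2 * x + 1) / ((n : ℚ) - x + 1))) * scal
  · intro x hkx hxm
    unfold racahPMF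
    simp only [Nat.sub_zero, Nat.add_zero]
    rw [racahSum_eq n m k x hm hmk hxm,
        Nat.choose_eq_zero_of_lt (show n-m-x < n-m-k by omega)]
    simp
end
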